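/- Let U be an encoding for g₁,…,g_p with scalars μ₁,…,μ_p, and assume ⟨g_i, g_j⟩ = 0 for all i, j (so the W(g_j) pairwise commute). Let e be an error element with s = (⟨g_j,e⟩)_j, and let (T^e_x)_x and (T^{e+g_j}_x)_x be the families realizing the block decompositions of U† W(e) U and U† W(e+g_j) U (note e and e+g_j have the same vector s of symplectic products). Then for each j ∈ {1,…,p} there exists c ∈ ℂ with |c| = 1 such that T^{e+g_j}_x = c · μ_j ω^{x_j} · T^e_x for all x ∈ (Fin p → ZMod d). -/

import Mathlib

open Matrix Complex

noncomputable section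

/-- ω = exp(2πi/d). -/
def omga (d : ℕ) : ℂ := Complex.exp (2 * Real.pi * Complex.I / d)

/-- The Weyl operator W_{k,l}: (j,j') entry is ω^{jk} if j' = j + l, else 0. -/
def weyl (d : ℕ) (k l : ZMod d) : Matrix (ZMod d) (ZMod d) ℂ :=
  Matrix.of fun j j' => if j' = j + l then omga d ^ (j * k).val else 0

/-- N-fold Kronecker product W(e), indexed by Fin N → ZMod d. -/
def weylN (d N : ℕ) (e : (Fin N → ZMod d) × (Fin N → ZMod d)) :
    Matrix (Fin N → ZMod d) (Fin N → ZMod d) ℂ :=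
  Matrix.of fun j j' => ∏ n, weyl d (e.1 n) (e.2 n) (j n) (j' n)

/-- Symplectic product ⟨e,f⟩ = Σₙ (lₙ mₙ − kₙ nₙ). -/
def symp (d N : ℕ) (e f : (Fin N → ZMod d) × (Fin N → ZMod d)) : ZMod d :=
  ∑ n, (e.2 n * f.1 n - e.1 n * f.2 n)

/-- `U` is an encoding for the error elements `g j` with unimodular scalars `μ j`, with
columns indexed by pairs `(x,k)` via the fixed bijection `ι`: each column
`u_{x,k} = U · e_{ι(x,k)}` is an eigenvector of `W(g j)` with eigenvalue `μ j · ω^{x j}`. -/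
def IsEncoding (d N p : ℕ) [NeZero d]
    (g : Fin p → (Fin N → ZMod d) × (Fin N → ZMod d)) (μ : Fin p → ℂ)
    (ι : ((Fin p → ZMod d) × (Fin (N - p) → ZMod d)) ≃ (Fin N → ZMod d))
    (U : Matrix (Fin N → ZMod d) (Fin N → ZMod d) ℂ) : Prop :=
  ∀ (j : Fin p) (x : Fin p → ZMod d) (k : Fin (N - p) → ZMod d),
    (weylN d N (g j)).mulVec (fun r => U r (ι (x, k))) =
      (μ j * omga d ^ (x j).val) • (fun r => U r (ι (x, k)))


lemma omga_norm (d : ℕ) : ‖omga d‖ = 1 := by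
  have h : omga d = Complex.exp ((((2 * Real.pi / d : ℝ)) : ℂ) * Complex.I) := by
    rw [omga]; push_cast; ring
  rw [h, Complex.norm_exp_ofReal_mul_I]

lemma omga_pow_d (d : ℕ) [NeZero d] : omga d ^ d = 1 := by
  have hd : (d : ℂ) ≠ 0 := Nat.cast_ne_zero.mpr (NeZero.ne d)
  rw [omga, ← Complex.exp_nat_mul]
  have : (d : ℂ) * (2 * Real.pi * Complex.I / d) = 2 * Real.pi * Complex.I := by
    field_simp
  rw [this, Complex.exp_two_pi_mul_I]

lemma omga_pow_mod (d : ℕ) [NeZero d] (m : ℕ) : omga d ^ (m % d) = omga d ^ m := by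
  conv_rhs => rw [← Nat.div_add_mod m d]
  rw [pow_add, pow_mul, omga_pow_d, one_pow, one_mul]

lemma omga_pow_val_add (d : ℕ) [NeZero d] (a b : ZMod d) :
    omga d ^ (a + b).val = omga d ^ a.val * omga d ^ b.val := by
  rw [ZMod.val_add, omga_pow_mod, pow_add]

lemma weyl_mul (d : ℕ) [NeZero d] (k l k' l' : ZMod d) :
    weyl d k l * weyl d k' l' =
      (omga d ^ (l * k').val) • weyl d (k + k') (l + l') := by
  ext j j''
  simp only [Matrix.mul_apply, weyl, Matrix.of_apply, Matrix.smul_apply, smul_eq_mul]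
  rw [Finset.sum_eq_single (j + l) (fun b _ hb => by simp [hb]) (by simp)]
  by_cases h : j'' = j + l + l'
  · have hc2 : j'' = j + (l + l') := by rw [h, add_assoc]
    rw [if_pos rfl, if_pos h, if_pos hc2]
    have h1 : (j + l) * k' = j * k' + l * k' := by ring
    have h2 : j * (k + k') = j * k + j * k' := by ring
    rw [h1, h2, omga_pow_val_add, omga_pow_val_add]
    ring
  · have hc2 : ¬ j'' = j + (l + l') := by rw [← add_assoc]; exact h
    rw [if_pos rfl, if_neg h, if_neg hc2, mul_zero, mul_zero]

lemma weylN_mul (d N : ℕ) [NeZero d] (e f : (Fin N → ZMod d) × (Fin N → ZMod d)) :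
    weylN d N e * weylN d N f =
      (∏ n, omga d ^ (e.2 n * f.1 n).val) • weylN d N (e + f) := by
  ext a b
  simp only [Matrix.mul_apply, weylN, Matrix.of_apply, Matrix.smul_apply, smul_eq_mul]
  calc ∑ c : Fin N → ZMod d, (∏ n, weyl d (e.1 n) (e.2 n) (a n) (c n)) *
        ∏ n, weyl d (f.1 n) (f.2 n) (c n) (b n)
      = ∑ c : Fin N → ZMod d, ∏ n, (weyl d (e.1 n) (e.2 n) (a n) (c n) *
          weyl d (f.1 n) (f.2 n) (c n) (b n)) := by
        simp_rw [Finset.prod_mul_distrib]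
    _ = ∏ n, ∑ t : ZMod d, weyl d (e.1 n) (e.2 n) (a n) t *
          weyl d (f.1 n) (f.2 n) t (b n) := by
        rw [Finset.prod_univ_sum]
        simp [Fintype.piFinset_univ]
    _ = ∏ n, (weyl d (e.1 n) (e.2 n) * weyl d (f.1 n) (f.2 n)) (a n) (b n) := by
        simp_rw [Matrix.mul_apply]
    _ = ∏ n, ((omga d ^ (e.2 n * f.1 n).val) •
          weyl d (e.1 n + f.1 n) (e.2 n + f.2 n)) (a n) (b n) := by
        simp_rw [weyl_mul]
    _ = (∏ n, omga d ^ (e.2 n * f.1 n).val) *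
          ∏ n, weyl d ((e + f).1 n) ((e + f).2 n) (a n) (b n) := by
        simp only [Matrix.smul_apply, smul_eq_mul, Finset.prod_mul_distrib,
          Prod.fst_add, Prod.snd_add, Pi.add_apply]

/-- errors differing by a generator have the same action up to the phase
c · μ_j ω^{x_j}: if (T^e_x) realizes U† W(e) U and (T^{e+g_j}_x) realizes U† W(e+g_j) U
(both with shift vector s = (⟨g_j,e⟩)_j, using ⟨g_i,g_j⟩ = 0), then for each j there is a
unimodular c with T^{e+g_j}_x = c · μ_j ω^{x_j} · T^e_x for all x. -/
theorem encoding_coset_error_action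
    (d N p : ℕ) [NeZero d] (hd : d.Prime) (hN : 1 ≤ N) (hp : p ≤ N)
    (g : Fin p → (Fin N → ZMod d) × (Fin N → ZMod d))
    (μ : Fin p → ℂ) (hμ : ∀ j, ‖μ j‖ = 1)
    (hcomm : ∀ i j, symp d N (g i) (g j) = 0)
    (ι : ((Fin p → ZMod d) × (Fin (N - p) → ZMod d)) ≃ (Fin N → ZMod d))
    (U : Matrix (Fin N → ZMod d) (Fin N → ZMod d) ℂ)
    (hU : U ∈ Matrix.unitaryGroup (Fin N → ZMod d) ℂ)
    (hEnc : IsEncoding d N p g μ ι U)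
    (e : (Fin N → ZMod d) × (Fin N → ZMod d))
    (s : Fin p → ZMod d) (hs : s = fun j => symp d N (g j) e)
    (Te : (Fin p → ZMod d) →
      Matrix (Fin (N - p) → ZMod d) (Fin (N - p) → ZMod d) ℂ)
    (Tg : Fin p → (Fin p → ZMod d) →
      Matrix (Fin (N - p) → ZMod d) (Fin (N - p) → ZMod d) ℂ)
    (hTe : ∀ (x x' : Fin p → ZMod d) (k k' : Fin (N - p) → ZMod d),
      (Uᴴ * weylN d N e * U) (ι (x', k')) (ι (x, k)) =
        if x' = x + s then Te (x + s) k' k else 0)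
    (hTg : ∀ (j : Fin p) (x x' : Fin p → ZMod d) (k k' : Fin (N - p) → ZMod d),
      (Uᴴ * weylN d N (e + g j) * U) (ι (x', k')) (ι (x, k)) =
        if x' = x + s then Tg j (x + s) k' k else 0) :
    ∀ j : Fin p, ∃ c : ℂ, ‖c‖ = 1 ∧
      ∀ x : Fin p → ZMod d,
        Tg j x = (c * μ j * omga d ^ (x j).val) • Te x := by
  intro j
  have hUU : Uᴴ * U = 1 := by
    have := hU.1; rwa [Matrix.star_eq_conjTranspose] at this
  have hUU' : U * Uᴴ = 1 := by
    have := hU.2; rwa [Matrix.star_eq_conjTranspose] at this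
  set c'' : ℂ := ∏ n, omga d ^ ((e.2 n) * ((g j).1 n)).val with hc''def
  have homn : ∀ m : ℕ, ‖omga d ^ m‖ = 1 := by
    intro m; rw [norm_pow, omga_norm, one_pow]
  have hc''norm : ‖c''‖ = 1 := by
    rw [hc''def, norm_prod]
    exact Finset.prod_eq_one (fun n _ => homn _)
  have hne : c'' ≠ 0 := by
    intro h0; rw [h0, norm_zero] at hc''norm; exact zero_ne_one hc''norm
  -- the conjugated W(g j) is diagonal
  have hD : ∀ (a : Fin N → ZMod d) (x : Fin p → ZMod d) (k : Fin (N - p) → ZMod d),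
      (Uᴴ * weylN d N (g j) * U) a (ι (x, k)) =
        (μ j * omga d ^ (x j).val) * (1 : Matrix (Fin N → ZMod d) (Fin N → ZMod d) ℂ) a (ι (x, k)) := by
    intro a x k
    have hcol : ∀ r, (weylN d N (g j) * U) r (ι (x, k)) =
        (μ j * omga d ^ (x j).val) * U r (ι (x, k)) := by
      intro r
      have h := congrFun (hEnc j x k) r
      simpa [Matrix.mulVec, Matrix.mul_apply, dotProduct] using h
    rw [Matrix.mul_assoc, Matrix.mul_apply]
    simp_rw [hcol]
    have : ∑ r, Uᴴ a r * ((μ j * omga d ^ (x j).val) * U r (ι (x, k)))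
        = (μ j * omga d ^ (x j).val) * ∑ r, Uᴴ a r * U r (ι (x, k)) := by
      rw [Finset.mul_sum]; congr 1; ext r; ring
    rw [this, ← Matrix.mul_apply, hUU]
  -- key identity
  have hkey : (Uᴴ * weylN d N e * U) * (Uᴴ * weylN d N (g j) * U)
      = c'' • (Uᴴ * weylN d N (e + g j) * U) := by
    have h2 : Uᴴ * weylN d N e * U * (Uᴴ * weylN d N (g j) * U)
        = Uᴴ * (weylN d N e * (U * Uᴴ) * (weylN d N (g j) * U)) := by
      simp only [Matrix.mul_assoc]
    rw [h2, hUU', Matrix.mul_one]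
    have h3 : weylN d N e * (weylN d N (g j) * U)
        = (weylN d N e * weylN d N (g j)) * U := by rw [Matrix.mul_assoc]
    rw [h3, weylN_mul, Matrix.smul_mul, Matrix.mul_smul, ← Matrix.mul_assoc]
  -- entrywise relation
  have hentry : ∀ (x : Fin p → ZMod d) (k k' : Fin (N - p) → ZMod d),
      c'' * Tg j (x + s) k' k = Te (x + s) k' k * (μ j * omga d ^ (x j).val) := by
    intro x k k'
    have h := congrFun (congrFun hkey (ι (x + s, k'))) (ι (x, k))
    rw [Matrix.mul_apply] at h
    simp_rw [hD, Matrix.one_apply] at h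
    rw [Finset.sum_eq_single (ι (x, k)) (fun b _ hb => by simp [hb]) (by simp)] at h
    rw [if_pos rfl, mul_one, hTe, if_pos rfl] at h
    have h' := h.symm
    rw [Matrix.smul_apply, hTg, if_pos rfl, smul_eq_mul] at h'
    exact h'
  refine ⟨c''⁻¹ * omga d ^ (-(s j)).val, ?_, ?_⟩
  · rw [norm_mul, norm_inv, hc''norm, inv_one, one_mul, homn]
  · intro y
    ext k' k
    have h := hentry (y - s) k k'
    have hys : y - s + s = y := by abel
    rw [hys] at h
    have hyj : (y - s) j = -(s j) + y j := by
      simp only [Pi.sub_apply]; ring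
    rw [hyj, omga_pow_val_add] at h
    rw [Matrix.smul_apply, smul_eq_mul]
    apply mul_left_cancel₀ hne
    rw [h]
    field_simp

end
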